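/- Let 0 < s < ℓ, L = 2^ℓ, and x₀, x₁ ∈ [0, L). Write x₀ = u₀·2^s + v₀ and x₁ = u₁·2^s + v₁ with v₀, v₁ ∈ [0, 2^s). Let x = (x₀ + x₁) mod L. Then the logical right shift x >> s (i.e., ⌊x / 2^s⌋) equals (u₀ + u₁ - 2^{ℓ-s}·wrap(x₀, x₁, L) + wrap(v₀, v₁, 2^s)) mod 2^{ℓ-s}, where wrap(a, b, M) := 1 if a + b ≥ M, else 0. -/

import Mathlib

def wrap (a b M : ℕ) : ℕ := if M ≤ a + b then 1 else 0

theorem stmt0 (ℓ s : ℕ) (hs : 0 < s) (hsl : s < ℓ)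
    (x₀ x₁ u₀ u₁ v₀ v₁ x : ℕ)
    (hx₀ : x₀ < 2 ^ ℓ) (hx₁ : x₁ < 2 ^ ℓ)
    (hd₀ : x₀ = u₀ * 2 ^ s + v₀) (hd₁ : x₁ = u₁ * 2 ^ s + v₁)
    (hv₀ : v₀ < 2 ^ s) (hv₁ : v₁ < 2 ^ s)
    (hx : x = (x₀ + x₁) % 2 ^ ℓ) :
    (x / 2 ^ s : ℤ) =
      ((u₀ : ℤ) + u₁ - 2 ^ (ℓ - s) * wrap x₀ x₁ (2 ^ ℓ) + wrap v₀ v₁ (2 ^ s))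
        % 2 ^ (ℓ - s) := by
  have hpow : (2:ℤ) ^ (ℓ - s) * 2 ^ s = 2 ^ ℓ := by
    rw [← pow_add]; congr 1; omega
  set w := wrap x₀ x₁ (2 ^ ℓ) with hw
  set w' := wrap v₀ v₁ (2 ^ s) with hw'
  set q : ℤ := (u₀ : ℤ) + u₁ - 2 ^ (ℓ - s) * w + w' with hqdef
  set r : ℤ := (v₀ + v₁ : ℤ) - w' * 2 ^ s with hrdef
  have h2s : (0:ℤ) < 2 ^ s := by positivity
  have hxZ : (x:ℤ) = (x₀ + x₁ : ℤ) - w * 2 ^ ℓ := by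
    subst hx
    by_cases h : 2 ^ ℓ ≤ x₀ + x₁
    · have hw1 : w = 1 := by simp [hw, wrap, h]
      have hm : (x₀ + x₁) % 2 ^ ℓ = x₀ + x₁ - 2 ^ ℓ := by
        rw [Nat.mod_eq_sub_mod h, Nat.mod_eq_of_lt (by omega)]
      rw [hm, hw1]
      push_cast [h]
      ring
    · have hw0 : w = 0 := by simp [hw, wrap, h]
      rw [Nat.mod_eq_of_lt (by omega), hw0]
      push_cast
      ring
  have hr0 : 0 ≤ r := by
    by_cases h : 2 ^ s ≤ v₀ + v₁
    · have hw1 : w' = 1 := by simp [hw', wrap, h]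
      have h' : (2:ℤ) ^ s ≤ (v₀:ℤ) + v₁ := by exact_mod_cast h
      rw [hrdef, hw1]; push_cast; linarith
    · have hw0 : w' = 0 := by simp [hw', wrap, h]
      rw [hrdef, hw0]; push_cast; linarith [Int.natCast_nonneg v₀, Int.natCast_nonneg v₁]
  have hr1 : r < 2 ^ s := by
    have hv₀' : (v₀:ℤ) < 2 ^ s := by exact_mod_cast hv₀
    have hv₁' : (v₁:ℤ) < 2 ^ s := by exact_mod_cast hv₁
    by_cases h : 2 ^ s ≤ v₀ + v₁
    · have hw1 : w' = 1 := by simp [hw', wrap, h]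
      rw [hrdef, hw1]; push_cast; linarith
    · have hw0 : w' = 0 := by simp [hw', wrap, h]
      have h' : (v₀:ℤ) + v₁ < 2 ^ s := by exact_mod_cast Nat.lt_of_not_le h
      rw [hrdef, hw0]; push_cast; linarith
  have hd₀Z : (x₀:ℤ) = u₀ * 2 ^ s + v₀ := by exact_mod_cast hd₀
  have hd₁Z : (x₁:ℤ) = u₁ * 2 ^ s + v₁ := by exact_mod_cast hd₁
  have hq : (x:ℤ) = q * 2 ^ s + r := by
    rw [hxZ, hqdef, hrdef]
    linear_combination hd₀Z + hd₁Z + (w:ℤ) * hpow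
  have hdiv : (x:ℤ) / 2 ^ s = q := by
    rw [hq, add_comm, Int.add_mul_ediv_right _ _ (ne_of_gt h2s),
      Int.ediv_eq_zero_of_lt hr0 hr1, zero_add]
  have hxlt : x < 2 ^ ℓ := by rw [hx]; exact Nat.mod_lt _ (by positivity)
  have hqlt : q < 2 ^ (ℓ - s) := by
    rw [← hdiv]
    have : x / 2 ^ s < 2 ^ (ℓ - s) := by
      rw [Nat.div_lt_iff_lt_mul (by positivity)]
      calc x < 2 ^ ℓ := hxlt
        _ = 2 ^ (ℓ - s) * 2 ^ s := by rw [← pow_add]; congr 1; omega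
    calc (x:ℤ) / 2 ^ s = ((x / 2 ^ s : ℕ) : ℤ) := by exact_mod_cast (Int.natCast_div x (2^s)).symm
      _ < 2 ^ (ℓ - s) := by exact_mod_cast this
  have hq0 : 0 ≤ q := by
    rw [← hdiv]; exact Int.ediv_nonneg (by positivity) (le_of_lt h2s)
  calc (x:ℤ) / 2 ^ s = q := hdiv
    _ = q % 2 ^ (ℓ - s) := (Int.emod_eq_of_lt hq0 hqlt).symm
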